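/- (Snevily) Let k, l ≥ 1 be relatively prime integers and let a be a (k,l)-arrangement of length n = k + l. For a zero position r (a position with a_r = 0), let P(r) be the position-sum of the 0-linearization ending at r, namely the sum of the indices j ∈ {1, …, n} such that a_{r+j} = 1. Then the l values P(r), over the l zero positions r, are pairwise incongruent modulo l. -/

import Mathlib

/-- The position-sum of the 0-linearization of `a` ending at `r`: the sum of the
indices `j ∈ {1, …, n}` such that `a (r+j) = 1` (`true`). -/
def positionSum {n : ℕ} (a : ZMod n → Bool) (r : ZMod n) : ℕ :=
  ∑ j ∈ Finset.Icc 1 n, if a (r + ((j : ℕ) : ZMod n)) = true then j else 0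

private lemma snevily_keyA (n : ℕ) [NeZero n] (a : ZMod n → Bool) (O : Finset (ZMod n))
    (hOdef : O = Finset.univ.filter (fun i => a i = true))
    (t : ZMod n) (ht : a t = false) :
    positionSum a t = ∑ i ∈ O, (i - t).val := by
  have cast_val : ∀ x : ZMod n, (((x.val : ℕ) : ZMod n)) = x := by
    intro x; simp [ZMod.natCast_val, ZMod.cast_id]
  have h1 : ∑ i ∈ O, (i - t).val
      = ∑ i ∈ Finset.univ, (if a i = true then (i - t).val else 0) := by
    rw [hOdef]; exact Finset.sum_filter _ _
  have h2 : ∑ i ∈ Finset.univ, (if a i = true then (i - t).val else 0)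
      = ∑ j ∈ Finset.range n,
          (if a (t + ((j : ℕ) : ZMod n)) = true then ((t + ((j : ℕ) : ZMod n)) - t).val else 0) := by
    refine Finset.sum_nbij' (fun i => (i - t).val) (fun j => t + ((j : ℕ) : ZMod n))
      ?_ ?_ ?_ ?_ ?_
    · intro i _; exact Finset.mem_range.mpr (ZMod.val_lt _)
    · intro j _; exact Finset.mem_univ _
    · intro i _; simp [cast_val]
    · intro j hj
      have : ((j : ℕ) : ZMod n).val = j := ZMod.val_cast_of_lt (Finset.mem_range.mp hj)
      simp [this]
    · intro i _; simp [cast_val]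
  have h3 : ∀ j ∈ Finset.range n,
      (if a (t + ((j : ℕ) : ZMod n)) = true then ((t + ((j : ℕ) : ZMod n)) - t).val else 0)
      = (if a (t + ((j : ℕ) : ZMod n)) = true then j else 0) := by
    intro j hj
    have : ((t + ((j : ℕ) : ZMod n)) - t).val = j := by
      have : (t + ((j : ℕ) : ZMod n)) - t = ((j : ℕ) : ZMod n) := by ring
      rw [this]; exact ZMod.val_cast_of_lt (Finset.mem_range.mp hj)
    rw [this]
  have hmid : ∑ i ∈ O, (i - t).val
      = ∑ j ∈ Finset.range n, (if a (t + ((j : ℕ) : ZMod n)) = true then j else 0) := by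
    rw [h1, h2]; exact Finset.sum_congr rfl h3
  -- now both Icc 1 n and range n sums equal the Ico 1 n sum
  set g : ℕ → ℕ := fun j => if a (t + ((j : ℕ) : ZMod n)) = true then j else 0 with hg
  have hnpos : 0 < n := Nat.pos_of_ne_zero (NeZero.ne n)
  have hzero : g 0 = 0 := by simp [hg, ht]
  have hzn : g n = 0 := by simp [hg, ZMod.natCast_self, ht]
  have e1 : ∑ j ∈ Finset.Ico 1 n, g j = ∑ j ∈ Finset.range n, g j := by
    refine Finset.sum_subset ?_ ?_
    · intro x hx; rw [Finset.mem_range]; exact (Finset.mem_Ico.mp hx).2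
    · intro x hx hnx
      have : x = 0 := by
        rw [Finset.mem_range] at hx; rw [Finset.mem_Ico] at hnx; omega
      rw [this]; exact hzero
  have e2 : ∑ j ∈ Finset.Ico 1 n, g j = ∑ j ∈ Finset.Icc 1 n, g j := by
    refine Finset.sum_subset ?_ ?_
    · intro x hx; rw [Finset.mem_Icc]; rw [Finset.mem_Ico] at hx; omega
    · intro x hx hnx
      have : x = n := by
        rw [Finset.mem_Icc] at hx; rw [Finset.mem_Ico] at hnx; omega
      rw [this]; exact hzn
  show ∑ j ∈ Finset.Icc 1 n, g j = _
  rw [hmid, ← e1, e2]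

private lemma snevily_main (k l n : ℕ) (hk : 1 ≤ k) (hl : 1 ≤ l) (hco : Nat.Coprime k l)
    (hn : n = k + l) [NeZero n] (a : ZMod n → Bool)
    (O : Finset (ZMod n)) (hOdef : O = Finset.univ.filter (fun i => a i = true))
    (hO : O.card = k)
    (r s : ZMod n) (hr : a r = false) (hs : a s = false) (hrs : r ≠ s)
    (P : ZMod n → ℕ)
    (keyA : ∀ t : ZMod n, a t = false → P t = ∑ i ∈ O, (i - t).val)
    (hmod : P r ≡ P s [MOD l]) : False := by
  set d : ℕ := (s - r).val with hd
  have hd1 : 1 ≤ d := ZMod.val_pos.mpr (sub_ne_zero.mpr (Ne.symm hrs))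
  have hd2 : d < n := ZMod.val_lt _
  set m : ℕ := (O.filter (fun i => n ≤ (i - s).val + d)).card with hm
  -- key identity
  have key : P r + n * m = P s + k * d := by
    rw [keyA r hr, keyA s hs]
    have hterm : ∀ i ∈ O,
        (i - r).val + (if n ≤ (i - s).val + d then n else 0) = (i - s).val + d := by
      intro i hi
      have hvr : (i - r).val = ((i - s).val + d) % n := by
        have h : i - r = (i - s) + (s - r) := by ring
        rw [h, ZMod.val_add]
      have hv : (i - s).val < n := ZMod.val_lt _
      by_cases h : n ≤ (i - s).val + d
      · rw [if_pos h, hvr, Nat.mod_eq_sub_mod h, Nat.mod_eq_of_lt (by omega)]; omega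
      · rw [if_neg h, hvr, Nat.mod_eq_of_lt (by omega)]; omega
    have hsum : ∑ i ∈ O, ((i - r).val + (if n ≤ (i - s).val + d then n else 0))
        = ∑ i ∈ O, ((i - s).val + d) := Finset.sum_congr rfl hterm
    rw [Finset.sum_add_distrib, Finset.sum_add_distrib] at hsum
    have e1 : ∑ i ∈ O, (if n ≤ (i - s).val + d then n else 0) = n * m := by
      rw [← Finset.sum_filter, Finset.sum_const, smul_eq_mul, hm, Nat.mul_comm]
    have e2 : ∑ _i ∈ O, d = k * d := by
      rw [Finset.sum_const, smul_eq_mul, hO]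
    rw [e1, e2] at hsum
    omega
  -- modular consequence: d ≡ m [MOD l]
  have hdm : d ≡ m [MOD l] := by
    have h1 : P s + k * d ≡ P s + n * m [MOD l] := by
      calc P s + k * d = P r + n * m := key.symm
        _ ≡ P s + n * m [MOD l] := Nat.ModEq.add_right _ hmod
    have h2 : k * d ≡ n * m [MOD l] := (Nat.ModEq.add_left_cancel' _ h1)
    have h3 : n * m ≡ k * m [MOD l] := by
      refine Nat.ModEq.mul_right _ ?_
      show n % l = k % l
      rw [hn, Nat.add_mod_right]
    have h4 : k * d ≡ k * m [MOD l] := h2.trans h3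
    exact Nat.ModEq.cancel_left_of_coprime hco.symm h4
  -- counting: the set T
  set T : Finset (ZMod n) := Finset.univ.filter (fun i => n - d ≤ (i - s).val) with hT
  have hTcard : T.card = d := by
    have : T.card = (Finset.Ico (n - d) n).card := by
      refine Finset.card_nbij' (fun i => (i - s).val) (fun x => s + ((x : ℕ) : ZMod n))
        ?_ ?_ ?_ ?_
      · intro i hi
        rw [Finset.mem_coe, Finset.mem_Ico]
        rw [Finset.mem_coe, hT, Finset.mem_filter] at hi
        exact ⟨hi.2, ZMod.val_lt _⟩
      · intro x hx
        rw [Finset.mem_coe, Finset.mem_Ico] at hx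
        rw [Finset.mem_coe, hT, Finset.mem_filter]
        refine ⟨Finset.mem_univ _, ?_⟩
        have : (s + ((x : ℕ) : ZMod n)) - s = ((x : ℕ) : ZMod n) := by ring
        rw [this, ZMod.val_cast_of_lt hx.2]
        exact hx.1
      · intro i _; simp [ZMod.natCast_val, ZMod.cast_id]
      · intro x hx
        rw [Finset.mem_coe, Finset.mem_Ico] at hx
        show ((s + ((x : ℕ) : ZMod n)) - s).val = x
        have h : (s + ((x : ℕ) : ZMod n)) - s = ((x : ℕ) : ZMod n) := by ring
        rw [h, ZMod.val_cast_of_lt hx.2]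
    rw [this, Nat.card_Ico]; omega
  -- r ∈ T, a r = false
  have hrval : (r - s).val = n - d := by
    have h : r - s = -(s - r) := by ring
    rw [h, ZMod.neg_val, if_neg (sub_ne_zero.mpr (Ne.symm hrs))]
  have hrT : r ∈ T := by
    rw [hT, Finset.mem_filter]; exact ⟨Finset.mem_univ _, by rw [hrval]⟩
  have hsT : s ∉ T := by
    rw [hT, Finset.mem_filter]
    simp only [Finset.mem_univ, true_and, sub_self, ZMod.val_zero]
    omega
  -- split T into ones and zeros
  have hTones : (T.filter (fun i => a i = true)).card = m := by
    rw [hm]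
    congr 1
    rw [hT, hOdef, Finset.filter_filter, Finset.filter_filter]
    apply Finset.filter_congr
    intro i _
    have hv : (i - s).val < n := ZMod.val_lt _
    constructor
    · rintro ⟨h1, h2⟩; exact ⟨h2, by omega⟩
    · rintro ⟨h1, h2⟩; exact ⟨by omega, h1⟩
  have hsplit : (T.filter (fun i => a i = true)).card
      + (T.filter (fun i => a i = false)).card = T.card := by
    have h := Finset.card_filter_add_card_filter_not (s := T)
      (p := fun i => a i = true)
    have he : T.filter (fun i => ¬ a i = true) = T.filter (fun i => a i = false) := by
      apply Finset.filter_congr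
      intro i _
      cases h : a i <;> simp
    rw [he] at h
    exact h
  -- m < d
  have hmd : m < d := by
    have hrz : r ∈ T.filter (fun i => a i = false) := by
      rw [Finset.mem_filter]; exact ⟨hrT, hr⟩
    have : 0 < (T.filter (fun i => a i = false)).card := Finset.card_pos.mpr ⟨r, hrz⟩
    omega
  -- zeros count: total zeros = l
  have hzeros : (Finset.univ.filter (fun i : ZMod n => a i = false)).card = l := by
    have htot : (Finset.univ.filter (fun i : ZMod n => a i = true)).card
        + (Finset.univ.filter (fun i : ZMod n => a i = false)).card = n := by
      have h := Finset.card_filter_add_card_filter_not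
        (s := (Finset.univ : Finset (ZMod n))) (p := fun i => a i = true)
      have he : (Finset.univ : Finset (ZMod n)).filter (fun i => ¬ a i = true)
          = Finset.univ.filter (fun i : ZMod n => a i = false) := by
        apply Finset.filter_congr
        intro i _
        cases h : a i <;> simp
      rw [he, Finset.card_univ, ZMod.card] at h
      exact h
    rw [← hOdef, hO] at htot
    omega
  have hsub : T.filter (fun i => a i = false)
      ⊆ (Finset.univ.filter (fun i : ZMod n => a i = false)).erase s := by
    intro i hi
    rw [Finset.mem_filter] at hi
    rw [Finset.mem_erase, Finset.mem_filter]
    refine ⟨?_, Finset.mem_univ _, hi.2⟩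
    rintro rfl; exact hsT hi.1
  have hle : d - m ≤ l - 1 := by
    have h1 : (T.filter (fun i => a i = false)).card
        ≤ ((Finset.univ.filter (fun i : ZMod n => a i = false)).erase s).card :=
      Finset.card_le_card hsub
    have h2 : ((Finset.univ.filter (fun i : ZMod n => a i = false)).erase s).card = l - 1 := by
      rw [Finset.card_erase_of_mem, hzeros]
      rw [Finset.mem_filter]; exact ⟨Finset.mem_univ _, hs⟩
    omega
  -- final contradiction
  have hdvd : (l : ℤ) ∣ (d : ℤ) - (m : ℤ) := Nat.ModEq.dvd hdm.symm
  have hpos : 0 < (d : ℤ) - (m : ℤ) := by omega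
  have := Int.le_of_dvd hpos hdvd
  omega

/-- (Snevily) Let `k, l ≥ 1` be relatively prime and let `a` be a `(k, l)`-arrangement
of length `k + l`. Then the position-sums of the 0-linearizations of `a`, over the `l`
zero positions, belong to distinct congruence classes modulo `l`. -/
theorem snevily (k l : ℕ) (hk : 1 ≤ k) (hl : 1 ≤ l) (hco : Nat.Coprime k l)
    (a : ZMod (k + l) → Bool)
    (hones : Nat.card {i : ZMod (k + l) | a i = true} = k) :
    ∀ r s : ZMod (k + l), a r = false → a s = false → r ≠ s →
      ¬ (positionSum a r ≡ positionSum a s [MOD l]) := by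
  intro r s hr hs hrs hmod
  haveI : NeZero (k + l) := ⟨by omega⟩
  set O : Finset (ZMod (k + l)) := Finset.univ.filter (fun i => a i = true) with hOdef
  have hO : O.card = k := by
    rw [hOdef, ← Fintype.card_subtype, ← Nat.card_eq_fintype_card]
    exact hones
  exact snevily_main k l (k + l) hk hl hco rfl a O hOdef hO r s hr hs hrs
    (positionSum a) (fun t ht => snevily_keyA (k + l) a O hOdef t ht) hmod
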